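/- Let Γ be an icc group and let Θ₁, Θ₂ ≤ Γ be subgroups such that the commutator subgroup ⁅Θ₁, Θ₂⁆ is finite and the subgroup Θ generated by Θ₁ ∪ Θ₂ has finite index in Γ. Then every element of Θ₁ commutes with every element of Θ₂, and Θ₁ ∩ Θ₂ = {1}. -/

import Mathlib

open Subgroup
open scoped commutatorElement

/-- If every `Θ`-conjugate of `g` lies in a finite set `N` and `Θ` has finite index,
then the full conjugacy class of `g` is finite. -/
lemma conjClass_finite {Γ : Type*} [Group Γ] (Θ : Subgroup Γ) (hind : Θ.index ≠ 0)
    {N : Set Γ} (hN : N.Finite) (g : Γ) (hg : ∀ k ∈ Θ, k * g * k⁻¹ ∈ N) :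
    {x : Γ | ∃ h : Γ, x = h * g * h⁻¹}.Finite := by
  have hfin : Finite (Γ ⧸ Θ) := by
    rw [Subgroup.index] at hind
    exact (Nat.card_ne_zero.mp hind).2
  have : {x : Γ | ∃ h : Γ, x = h * g * h⁻¹} ⊆
      (fun p : (Γ ⧸ Θ) × Γ => p.1.out * p.2 * p.1.out⁻¹) '' (Set.univ ×ˢ N) := by
    rintro x ⟨h, rfl⟩
    set q : Γ ⧸ Θ := QuotientGroup.mk h with hq
    have hr : (QuotientGroup.mk q.out : Γ ⧸ Θ) = QuotientGroup.mk h :=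
      (QuotientGroup.out_eq' q).trans hq
    have hk : q.out⁻¹ * h ∈ Θ := (QuotientGroup.eq ..).mp hr
    refine ⟨(q, (q.out⁻¹ * h) * g * (q.out⁻¹ * h)⁻¹), ⟨trivial, hg _ hk⟩, ?_⟩
    simp only []
    group
  exact ((Set.finite_univ.prod hN).image _).subset this

lemma conj_commutator_left {Γ : Type*} [Group Γ] {Θ₁ Θ₂ : Subgroup Γ}
    {h : Γ} (hh : h ∈ Θ₁) {x : Γ} (hx : x ∈ ⁅Θ₁, Θ₂⁆) : h * x * h⁻¹ ∈ ⁅Θ₁, Θ₂⁆ := by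
  rw [Subgroup.commutator_def] at hx
  induction hx using Subgroup.closure_induction with
  | mem y hy =>
      obtain ⟨a, ha, b, hb, rfl⟩ := hy
      have key : h * ⁅a, b⁆ * h⁻¹ = ⁅h * a, b⁆ * ⁅h, b⁆⁻¹ := by
        simp only [commutatorElement_def]; group
      rw [key]
      exact mul_mem (commutator_mem_commutator (mul_mem hh ha) hb)
        (inv_mem (commutator_mem_commutator hh hb))
  | one => simpa using one_mem _
  | mul y z _ _ hy hz =>
      have : h * (y * z) * h⁻¹ = (h * y * h⁻¹) * (h * z * h⁻¹) := by group
      rw [this]; exact mul_mem hy hz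
  | inv y _ hy =>
      have : h * y⁻¹ * h⁻¹ = (h * y * h⁻¹)⁻¹ := by group
      rw [this]; exact inv_mem hy

lemma sup_le_normalizer_commutator {Γ : Type*} [Group Γ] (Θ₁ Θ₂ : Subgroup Γ) :
    Θ₁ ⊔ Θ₂ ≤ Subgroup.normalizer ((⁅Θ₁, Θ₂⁆ : Subgroup Γ) : Set Γ) := by
  have h1 : Θ₁ ≤ Subgroup.normalizer ((⁅Θ₁, Θ₂⁆ : Subgroup Γ) : Set Γ) := by
    intro h hh
    rw [mem_normalizer_iff]
    intro x
    constructor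
    · exact fun hx => conj_commutator_left hh hx
    · intro hx
      have := conj_commutator_left (inv_mem hh) hx
      simpa [mul_assoc] using this
  have h2 : Θ₂ ≤ Subgroup.normalizer ((⁅Θ₁, Θ₂⁆ : Subgroup Γ) : Set Γ) := by
    intro h hh
    rw [mem_normalizer_iff]
    have conj2 : ∀ {k : Γ}, k ∈ Θ₂ → ∀ {x : Γ}, x ∈ ⁅Θ₁, Θ₂⁆ → k * x * k⁻¹ ∈ ⁅Θ₁, Θ₂⁆ := by
      intro k hk x hx
      rw [commutator_comm] at hx ⊢
      exact conj_commutator_left hk hx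
    intro x
    constructor
    · exact fun hx => conj2 hh hx
    · intro hx
      have := conj2 (inv_mem hh) hx
      simpa [mul_assoc] using this
  exact sup_le h1 h2

/-- Let `Γ` be icc and `Θ₁, Θ₂ ≤ Γ` with finite commutator subgroup `⁅Θ₁, Θ₂⁆`
and with `Θ = ⟨Θ₁ ∪ Θ₂⟩` of finite index in `Γ`. Then the elements of `Θ₁`
commute with those of `Θ₂`, and `Θ₁ ∩ Θ₂ = {1}`. -/
theorem stmt8 (Γ : Type*) [Group Γ]
    (hicc : ∀ g : Γ, g ≠ 1 → {x : Γ | ∃ h : Γ, x = h * g * h⁻¹}.Infinite)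
    (Θ₁ Θ₂ : Subgroup Γ)
    (hcomm : ((⁅Θ₁, Θ₂⁆ : Subgroup Γ) : Set Γ).Finite)
    (hindex : (Θ₁ ⊔ Θ₂).index ≠ 0) :
    (∀ a ∈ Θ₁, ∀ b ∈ Θ₂, a * b = b * a) ∧ Θ₁ ⊓ Θ₂ = ⊥ := by
  -- Step 1: the commutator subgroup is trivial
  have hbot : (⁅Θ₁, Θ₂⁆ : Subgroup Γ) = ⊥ := by
    rw [eq_bot_iff]
    intro g hg
    rw [mem_bot]
    by_contra hg1
    have hfin : {x : Γ | ∃ h : Γ, x = h * g * h⁻¹}.Finite := by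
      refine conjClass_finite (Θ₁ ⊔ Θ₂) hindex hcomm g ?_
      intro k hk
      have := sup_le_normalizer_commutator Θ₁ Θ₂ hk
      rw [mem_normalizer_iff] at this
      exact (this g).mp hg
    exact hicc g hg1 hfin
  have hc : ∀ a ∈ Θ₁, ∀ b ∈ Θ₂, a * b = b * a := by
    intro a ha b hb
    have : ⁅a, b⁆ ∈ (⁅Θ₁, Θ₂⁆ : Subgroup Γ) := commutator_mem_commutator ha hb
    rw [hbot, mem_bot] at this
    exact commutatorElement_eq_one_iff_mul_comm.mp this
  refine ⟨hc, ?_⟩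
  -- Step 2: trivial intersection
  rw [eq_bot_iff]
  intro a ha
  rw [mem_bot]
  obtain ⟨ha1, ha2⟩ := ha
  by_contra ha0
  have hfin : {x : Γ | ∃ h : Γ, x = h * a * h⁻¹}.Finite := by
    refine conjClass_finite (Θ₁ ⊔ Θ₂) hindex (Set.finite_singleton a) a ?_
    intro k hk
    have hcent : Θ₁ ⊔ Θ₂ ≤ Subgroup.centralizer {a} := by
      refine sup_le ?_ ?_
      · intro x hx
        rw [Subgroup.mem_centralizer_iff]
        rintro y ⟨rfl⟩
        exact (hc x hx a ha2).symm
      · intro x hx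
        rw [Subgroup.mem_centralizer_iff]
        rintro y ⟨rfl⟩
        exact hc a ha1 x hx
    have := hcent hk
    rw [Subgroup.mem_centralizer_iff] at this
    have hak : a * k = k * a := this a rfl
    simp only [Set.mem_singleton_iff]
    rw [← hak]
    group
  exact hicc a ha0 hfin
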